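/- Along an A_m⁽¹⁾ X-variable sequence, the nested expression reproduces the inverse of the first X-variable m steps earlier: for every j ∈ ℤ one has x₁(j)·N(j+m) = 1, i.e. N(j+m) = x₁(j)⁻¹. -/
import Mathlib


/-- The nested expression `x_{m+1-k}(j)·(1 + x_{m+2-k}(j)·(1 + ⋯ x_m(j)·(1 + x_{m+1}(j))⋯))`
built from the X-variables `x i j`; `nestAux x m j (m-1)` is the expression
`N(j) = x₂(j)·(1 + x₃(j)·(1 + ⋯ x_m(j)·(1 + x_{m+1}(j))⋯))`. -/
def nestAux {F : Type*} [Field F] (x : ℕ → ℤ → F) (m : ℕ) (j : ℤ) : ℕ → F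
  | 0 => x (m + 1) j
  | k + 1 => x (m - k) j * (1 + nestAux x m j k)

/-- Along an `A_m⁽¹⁾` X-variable sequence, the nested expression reproduces the inverse of
the first X-variable `m` steps earlier: `N(j+m) = x₁(j)⁻¹`. -/
theorem am1_nested_inverse {F : Type*} [Field F] (m : ℕ) (hm : 2 ≤ m)
    (x : ℕ → ℤ → F)
    (hx₁ : ∀ j : ℤ, x 1 j ≠ 0) (hx₁' : ∀ j : ℤ, 1 + x 1 j ≠ 0)
    (hmutA : ∀ j : ℤ, x 1 (j + 1) * (1 + x 1 j) = x 2 j * x 1 j)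
    (hmutB : ∀ j : ℤ, x m (j + 1) * (1 + x 1 j) = x (m + 1) j * x 1 j)
    (hmutC : ∀ j : ℤ, x (m + 1) (j + 1) * x 1 j = 1)
    (hmutD : ∀ j : ℤ, ∀ i : ℕ, 2 ≤ i → i ≤ m - 1 → x i (j + 1) = x (i + 1) j) :
    ∀ j : ℤ, x 1 j * nestAux x m (j + m) (m - 1) = 1 := by
  have shift : ∀ (j : ℤ) (k : ℕ), k + 1 ≤ m - 1 →
      nestAux x m (j + 1) (k + 1) = nestAux x m j k := by
    intro j k
    induction k with
    | zero =>
      intro _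
      simp only [nestAux, Nat.sub_zero]
      have hB := hmutB j
      have hC := hmutC j
      have h2 : x m (j + 1) * (1 + x (m + 1) (j + 1)) * (x 1 j * (1 + x 1 j)) =
          x (m + 1) j * (x 1 j * (1 + x 1 j)) := by
        linear_combination (x 1 j * (1 + x (m + 1) (j + 1))) * hB +
          (x (m + 1) j * x 1 j) * hC
      exact mul_right_cancel₀ (mul_ne_zero (hx₁ j) (hx₁' j)) h2
    | succ k ih =>
      intro hk
      show x (m - (k + 1)) (j + 1) * (1 + nestAux x m (j + 1) (k + 1))
          = x (m - k) j * (1 + nestAux x m j k)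
      rw [ih (by omega)]
      have hD : x (m - (k + 1)) (j + 1) = x (m - (k + 1) + 1) j :=
        hmutD j (m - (k + 1)) (by omega) (by omega)
      rw [hD, show m - (k + 1) + 1 = m - k by omega]
  intro j
  have main : ∀ r : ℕ, r ≤ m - 1 → nestAux x m (j + 1 + r) r = x (m + 1) (j + 1) := by
    intro r
    induction r with
    | zero => intro _; simp [nestAux]
    | succ r ih =>
      intro hr
      have hcast : (j + 1 + ((r + 1 : ℕ) : ℤ)) = (j + 1 + r) + 1 := by push_cast; ring
      rw [hcast, shift _ r hr, ih (by omega)]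
  have h := main (m - 1) le_rfl
  have hj : (j + 1 + ((m - 1 : ℕ) : ℤ)) = j + m := by
    push_cast [Nat.cast_sub (by omega : 1 ≤ m)]; ring
  rw [hj] at h
  rw [h]
  linear_combination hmutC j
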